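/- Let $x \in \mathbb{Z}^n$ with $n \geq 2$, let $m(x) = \frac{1}{n}\sum_{j=1}^n x_j$ and $f(x) = \sum_{i=1}^n (x_i - m(x))^2$. If $f(x) > 0$, then for each standard basis vector $e_i$ we have $|f(x + e_i) - f(x)| \leq 4\sqrt{f(x)}$. -/

import Mathlib

set_option maxHeartbeats 1000000

theorem stmt_1 (n : ℕ) (hn : 2 ≤ n) (x : Fin n → ℤ) (i : Fin n)
    (m : (Fin n → ℝ) → ℝ) (hm : ∀ y, m y = (∑ j, y j) / n)
    (f : (Fin n → ℝ) → ℝ) (hf : ∀ y, f y = ∑ k, (y k - m y) ^ 2)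
    (hpos : 0 < f (fun k => (x k : ℝ))) :
    |f ((fun k => (x k : ℝ)) + Pi.single i 1) - f (fun k => (x k : ℝ))|
      ≤ 4 * Real.sqrt (f (fun k => (x k : ℝ))) := by
  set y : Fin n → ℝ := fun k => (x k : ℝ) with hy
  have hn0 : (0:ℝ) < n := by positivity
  have hnne : (n:ℝ) ≠ 0 := ne_of_gt hn0
  -- expansion lemma
  have expand : ∀ (z : Fin n → ℝ) (c : ℝ),
      ∑ k, (z k - c)^2 = (∑ k, (z k)^2) - 2*c*(∑ k, z k) + n * c^2 := by
    intro z c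
    have h1 : ∑ k, (z k - c)^2 = ∑ k, ((z k)^2 - 2*c*(z k) + c^2) :=
      Finset.sum_congr rfl fun k _ => by ring
    rw [h1, Finset.sum_add_distrib, Finset.sum_sub_distrib, ← Finset.mul_sum,
      Finset.sum_const, Finset.card_univ, Fintype.card_fin, nsmul_eq_mul]
  set S : ℝ := ∑ k, y k with hS
  set Q : ℝ := ∑ k, (y k)^2 with hQ
  have hfy : f y = Q - S^2 / n := by
    rw [hf, hm, expand]
    field_simp
    ring
  -- sums for y + e
  have hsum1 : ∑ k, ((y + Pi.single i 1 : Fin n → ℝ)) k = S + 1 := by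
    simp only [Pi.add_apply]
    rw [Finset.sum_add_distrib]
    congr 1
    simp [Pi.single_apply]
  have hsum2 : ∑ k, (((y + Pi.single i 1 : Fin n → ℝ)) k)^2 = Q + (2 * y i + 1) := by
    have h1 : ∀ k, (((y + Pi.single i 1 : Fin n → ℝ)) k)^2
        = (y k)^2 + (if k = i then 2 * y k + 1 else 0) := by
      intro k
      simp only [Pi.add_apply, Pi.single_apply]
      by_cases h : k = i <;> simp [h] <;> ring
    rw [Finset.sum_congr rfl fun k _ => h1 k, Finset.sum_add_distrib,
      Finset.sum_ite_eq' Finset.univ i (fun k => 2 * y k + 1)]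
    simp [hQ]
  have hfy2 : f (y + Pi.single i 1) = (Q + (2 * y i + 1)) - (S + 1)^2 / n := by
    rw [hf, hm, expand, hsum1, hsum2]
    field_simp
    ring
  have key : f (y + Pi.single i 1) - f y = 2 * (y i - S / n) + 1 - 1 / n := by
    rw [hfy, hfy2]
    field_simp
    ring
  -- |y i - S/n| ≤ sqrt (f y)
  have hterm : (y i - S / n)^2 ≤ f y := by
    rw [hf, hm]
    exact Finset.single_le_sum (f := fun k => (y k - (∑ j, y j)/n)^2)
      (fun k _ => sq_nonneg _) (Finset.mem_univ i)
  have hd : |y i - S / n| ≤ Real.sqrt (f y) := by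
    rw [← Real.sqrt_sq_eq_abs]
    exact Real.sqrt_le_sqrt hterm
  -- f y ≥ 1/2
  have hhalf : (1:ℝ)/2 ≤ f y := by
    -- find two distinct coordinates with different values
    by_cases hall : ∀ k l : Fin n, x k = x l
    · exfalso
      have : f y = 0 := by
        have k0 : Fin n := ⟨0, by omega⟩
        have hM : m y = y k0 := by
          rw [hm]
          have : ∀ j, y j = y k0 := fun j => by simp [hy, hall j k0]
          rw [Finset.sum_congr rfl fun j _ => this j]
          simp [Finset.card_univ]
          field_simp
        rw [hf, hM]
        apply Finset.sum_eq_zero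
        intro k _
        have : y k = y k0 := by simp [hy, hall k k0]
        rw [this]; ring
      linarith
    · push_neg at hall
      obtain ⟨k, l, hkl⟩ := hall
      have hklne : k ≠ l := fun h => hkl (by rw [h])
      have hint : (1:ℝ) ≤ (y k - y l)^2 := by
        have h1 : (1:ℤ) ≤ |x k - x l| :=
          Int.one_le_abs (sub_ne_zero.mpr hkl)
        have h2 : (1:ℝ) ≤ |y k - y l| := by
          have : ((1:ℤ):ℝ) ≤ (|x k - x l| : ℝ) := by exact_mod_cast h1
          simpa [hy] using this
        nlinarith [abs_nonneg (y k - y l), sq_abs (y k - y l)]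
      have hsub : (y k - m y)^2 + (y l - m y)^2 ≤ f y := by
        rw [hf]
        have := Finset.sum_le_sum_of_subset_of_nonneg
          (Finset.subset_univ ({k, l} : Finset (Fin n)))
          (fun j _ _ => sq_nonneg (y j - m y))
        rwa [Finset.sum_pair hklne] at this
      nlinarith [sq_nonneg (y k + y l - 2 * m y)]
  have hs : (1:ℝ)/2 ≤ Real.sqrt (f y) := by
    nlinarith [Real.sq_sqrt (le_of_lt hpos), Real.sqrt_nonneg (f y)]
  have hn2 : (1:ℝ)/n ≤ 1/2 := by
    rw [div_le_div_iff₀ hn0 (by norm_num)]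
    have : (2:ℝ) ≤ n := by exact_mod_cast hn
    linarith
  have hnpos : (0:ℝ) < 1/n := by positivity
  rw [key, abs_le]
  have := abs_le.mp hd
  constructor <;> nlinarith [this.1, this.2]
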